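/- If a regular finite non-negative Borel measure μ on a coset π⁻¹({γ̃}) of a closed subgroup Λ in Γ is such that the constant functions are dense in L^α(μ) for some α ∈ (0,∞), then μ is a non-negative multiple of a Dirac measure δ_γ for some γ in that coset. -/

import Mathlib

open MeasureTheory Set
open scoped NNReal ENNReal


/-- A finite non-negative Borel measure is *regular* (in the sense of the paper) if every
Borel set can be approximated from inside by compact sets and from outside by open sets. -/
def PaperRegular {X : Type*} [TopologicalSpace X] [MeasurableSpace X]
    (μ : Measure X) : Prop :=
  ∀ B : Set X, MeasurableSet B → ∀ ε : ENNReal, 0 < ε →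
    ∃ C U : Set X, IsCompact C ∧ IsOpen U ∧ C ⊆ B ∧ B ⊆ U ∧ μ (U \ C) < ε

/-- A family `F` of functions is dense in `L^α(μ)` (`0 < α < ∞`). -/
def DenseInLp {X : Type*} [MeasurableSpace X] (μ : Measure X) (α : ℝ)
    (F : Set (X → ℂ)) : Prop :=
  ∀ g : X → ℂ, Measurable g → (∫⁻ x, (‖g x‖₊ : ENNReal) ^ α ∂μ) < ⊤ →
    ∀ ε : ENNReal, 0 < ε → ∃ p ∈ F, (∫⁻ x, (‖g x - p x‖₊ : ENNReal) ^ α ∂μ) < ε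

lemma dichotomy {X : Type*} [MeasurableSpace X] (μ : Measure X) [IsFiniteMeasure μ]
    (α : ℝ) (hα : 0 < α)
    (hdense : DenseInLp μ α {p : X → ℂ | ∃ c : ℂ, p = fun _ => c})
    (B : Set X) (hB : MeasurableSet B) : μ B = 0 ∨ μ Bᶜ = 0 := by
  by_contra h
  push_neg at h
  obtain ⟨h1, h2⟩ := h
  set g : X → ℂ := B.indicator (fun _ => (1 : ℂ)) with hg
  have hgm : Measurable g := measurable_const.indicator hB
  have hfin : (∫⁻ x, (‖g x‖₊ : ENNReal) ^ α ∂μ) < ⊤ := by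
    calc (∫⁻ x, (‖g x‖₊ : ENNReal) ^ α ∂μ) ≤ ∫⁻ _, 1 ∂μ := by
          refine lintegral_mono fun x => ?_
          have : (‖g x‖₊ : ENNReal) ≤ 1 := by
            by_cases hx : x ∈ B <;> simp [hg, indicator, hx]
          calc (‖g x‖₊ : ENNReal) ^ α ≤ (1 : ENNReal) ^ α :=
                ENNReal.rpow_le_rpow this hα.le
            _ = 1 := ENNReal.one_rpow α
      _ = μ univ := lintegral_one
      _ < ⊤ := measure_lt_top μ univ
  set ε : ENNReal := (2⁻¹ : ENNReal) ^ α * min (μ B) (μ Bᶜ) with hε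
  have hεpos : 0 < ε := by
    apply ENNReal.mul_pos
    · exact (ENNReal.rpow_pos (by norm_num) (by norm_num)).ne'
    · exact (lt_min (pos_iff_ne_zero.mpr h1) (pos_iff_ne_zero.mpr h2)).ne'
  obtain ⟨p, hp, hint⟩ := hdense g hgm hfin ε hεpos
  obtain ⟨c, rfl⟩ := hp
  -- lower bounds
  have hBle : (‖(1 : ℂ) - c‖₊ : ENNReal) ^ α * μ B ≤
      ∫⁻ x, (‖g x - c‖₊ : ENNReal) ^ α ∂μ := by
    calc (‖(1 : ℂ) - c‖₊ : ENNReal) ^ α * μ B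
        = ∫⁻ _ in B, (‖(1 : ℂ) - c‖₊ : ENNReal) ^ α ∂μ := (setLIntegral_const _ _).symm
      _ = ∫⁻ x in B, (‖g x - c‖₊ : ENNReal) ^ α ∂μ := by
          refine setLIntegral_congr_fun hB (fun x hx => ?_)
          simp [hg, indicator, hx]
      _ ≤ ∫⁻ x, (‖g x - c‖₊ : ENNReal) ^ α ∂μ := setLIntegral_le_lintegral _ _
  have hBcle : (‖c‖₊ : ENNReal) ^ α * μ Bᶜ ≤
      ∫⁻ x, (‖g x - c‖₊ : ENNReal) ^ α ∂μ := by
    calc (‖c‖₊ : ENNReal) ^ α * μ Bᶜ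
        = ∫⁻ _ in Bᶜ, (‖c‖₊ : ENNReal) ^ α ∂μ := (setLIntegral_const _ _).symm
      _ = ∫⁻ x in Bᶜ, (‖g x - c‖₊ : ENNReal) ^ α ∂μ := by
          refine setLIntegral_congr_fun hB.compl (fun x hx => ?_)
          simp [hg, indicator, (mem_compl_iff _ _).mp hx]
      _ ≤ ∫⁻ x, (‖g x - c‖₊ : ENNReal) ^ α ∂μ := setLIntegral_le_lintegral _ _
  -- one of the norms is ≥ 1/2
  have hsum : (1 : ℝ) ≤ ‖(1 : ℂ) - c‖ + ‖c‖ := by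
    have := norm_add_le ((1 : ℂ) - c) c
    simpa using this
  have hmax : (2⁻¹ : ℝ) ≤ ‖(1 : ℂ) - c‖ ∨ (2⁻¹ : ℝ) ≤ ‖c‖ := by
    by_contra hcon
    push_neg at hcon
    linarith [hcon.1, hcon.2]
  have key : ε ≤ ∫⁻ x, (‖g x - c‖₊ : ENNReal) ^ α ∂μ := by
    rcases hmax with hm | hm
    · refine le_trans ?_ hBle
      apply mul_le_mul'
      · apply ENNReal.rpow_le_rpow _ hα.le
        have hnn : (2⁻¹ : ℝ≥0) ≤ ‖(1 : ℂ) - c‖₊ := by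
          rw [← NNReal.coe_le_coe]; simpa using hm
        have := ENNReal.coe_le_coe.mpr hnn
        rwa [ENNReal.coe_inv (by norm_num)] at this
      · exact min_le_left _ _
    · refine le_trans ?_ hBcle
      apply mul_le_mul'
      · apply ENNReal.rpow_le_rpow _ hα.le
        have hnn : (2⁻¹ : ℝ≥0) ≤ ‖c‖₊ := by
          rw [← NNReal.coe_le_coe]; simpa using hm
        have := ENNReal.coe_le_coe.mpr hnn
        rwa [ENNReal.coe_inv (by norm_num)] at this
      · exact min_le_right _ _
  exact absurd (lt_of_le_of_lt key hint) (lt_irrefl _)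

/-- if μ is a regular finite Borel measure concentrated on a single coset of a
closed subgroup Λ and the constant functions are dense in L^α(μ) for some α ∈ (0,∞), then μ
is a non-negative multiple of a Dirac measure at a point of that coset. -/
theorem dense_constants_implies_dirac
    {Γ : Type*} [AddCommGroup Γ] [TopologicalSpace Γ] [IsTopologicalAddGroup Γ] [T2Space Γ]
    [MeasurableSpace Γ] [BorelSpace Γ]
    (Λ : AddSubgroup Γ) (hΛ : IsClosed (Λ : Set Γ)) (q : Γ ⧸ Λ)
    (μ : Measure Γ) [IsFiniteMeasure μ] (hreg : PaperRegular μ)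
    (hsupp : μ ((QuotientAddGroup.mk (s := Λ) ⁻¹' {q})ᶜ) = 0)
    (α : ℝ) (hα : 0 < α)
    (hdense : DenseInLp μ α {p : Γ → ℂ | ∃ c : ℂ, p = fun _ => c}) :
    ∃ (c : ENNReal) (γ : Γ), QuotientAddGroup.mk (s := Λ) γ = q ∧
      μ = c • Measure.dirac γ := by
  have hdich : ∀ B : Set Γ, MeasurableSet B → μ B = 0 ∨ μ Bᶜ = 0 :=
    dichotomy μ α hα hdense
  by_cases hzero : μ univ = 0
  · refine ⟨0, Quotient.out q, Quotient.out_eq q, ?_⟩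
    have : μ = 0 := Measure.measure_univ_eq_zero.mp hzero
    simp [this]
  · set m := μ univ with hmdef
    have hm : 0 < m := pos_iff_ne_zero.mpr hzero
    -- Step 1: a compact set of full measure
    obtain ⟨C, U, hCcomp, hUopen, hCsub, hUsub, hCU⟩ := hreg univ MeasurableSet.univ m hm
    have hCmeas : MeasurableSet C := hCcomp.isClosed.measurableSet
    have hCclt : μ Cᶜ < m := by
      refine lt_of_le_of_lt (measure_mono fun x hx => ?_) hCU
      exact ⟨hUsub trivial, hx⟩
    have hsplit : μ C + μ Cᶜ = m := measure_add_measure_compl hCmeas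
    have hCfull : μ Cᶜ = 0 := by
      rcases hdich C hCmeas with h | h
      · rw [h, zero_add] at hsplit
        exact absurd hsplit (ne_of_lt hCclt)
      · exact h
    have hCm : μ C = m := by rw [← hsplit, hCfull, add_zero]
    -- Step 2: a point all of whose open neighbourhoods have positive measure
    have hexists : ∃ γ ∈ C, ∀ V : Set Γ, IsOpen V → γ ∈ V → μ V ≠ 0 := by
      by_contra hcon
      push_neg at hcon
      choose V hVopen hVmem hVnull using hcon
      obtain ⟨t, ht⟩ := hCcomp.elim_nhds_subcover' (fun x hx => V x hx)
        (fun x hx => (hVopen x hx).mem_nhds (hVmem x hx))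
      have hle : μ C ≤ ∑ x ∈ t, μ (V x x.2) :=
        le_trans (measure_mono ht) (measure_biUnion_finset_le t _)
      have : μ C = 0 := by
        have : (∑ x ∈ t, μ (V x x.2)) = 0 := Finset.sum_eq_zero fun x _ => hVnull x x.2
        exact le_antisymm (this ▸ hle) zero_le
      rw [hCm] at this
      exact hzero this
    obtain ⟨γ, hγC, hγ⟩ := hexists
    -- Step 3: μ {γ}ᶜ = 0
    have hsingm : MeasurableSet ({γ} : Set Γ) := isClosed_singleton.measurableSet
    have hγfull : μ ({γ}ᶜ) = 0 := by
      rcases hdich {γ} hsingm with h | h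
      · exfalso
        have hmc : μ ({γ}ᶜ) = m := by
          have := measure_add_measure_compl (μ := μ) hsingm
          rwa [h, zero_add] at this
        obtain ⟨C', U', hC'comp, hU'open, hC'sub, hU'sub, hC'U'⟩ :=
          hreg ({γ}ᶜ) hsingm.compl m hm
        have hC'meas : MeasurableSet C' := hC'comp.isClosed.measurableSet
        have hC'pos : μ C' ≠ 0 := by
          intro h0
          have hsub : ({γ}ᶜ : Set Γ) ⊆ C' ∪ (U' \ C') := by
            intro x hx
            by_cases hxC : x ∈ C'
            · exact Or.inl hxC
            · exact Or.inr ⟨hU'sub hx, hxC⟩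
          have : m ≤ μ C' + μ (U' \ C') := hmc ▸ le_trans (measure_mono hsub) (measure_union_le _ _)
          rw [h0, zero_add] at this
          exact absurd this (not_le.mpr hC'U')
        rcases hdich C' hC'meas with h' | h'
        · exact hC'pos h'
        · refine hγ (C'ᶜ) hC'comp.isClosed.isOpen_compl ?_ h'
          intro hγC'
          exact (hC'sub hγC') rfl
      · exact h
    have hγm : μ {γ} = m := by
      have := measure_add_measure_compl (μ := μ) hsingm
      rwa [hγfull, add_zero] at this
    refine ⟨m, γ, ?_, ?_⟩
    · by_contra hne
      have hsub : ({γ} : Set Γ) ⊆ (QuotientAddGroup.mk (s := Λ) ⁻¹' {q})ᶜ := by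
        intro x hx
        rw [mem_singleton_iff] at hx
        subst hx
        simpa using hne
      have := le_trans (measure_mono hsub) (le_of_eq hsupp)
      rw [hγm] at this
      exact hm.ne' (le_antisymm this zero_le)
    · refine Measure.ext fun s hs => ?_
      rw [Measure.smul_apply, Measure.dirac_apply' _ hs, smul_eq_mul]
      have hdiff : μ (s \ {γ}) = 0 :=
        measure_mono_null (fun x hx => hx.2) hγfull
      have hμs : μ s = μ (s ∩ {γ}) := by
        rw [← measure_inter_add_diff s hsingm, hdiff, add_zero]
      by_cases hγs : γ ∈ s
      · rw [hμs, inter_eq_right.mpr (singleton_subset_iff.mpr hγs), hγm]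
        simp [indicator, hγs]
      · rw [hμs, ]
        have : s ∩ {γ} = ∅ := by
          ext x; simp only [mem_inter_iff, mem_singleton_iff, mem_empty_iff_false, iff_false]
          rintro ⟨hxs, rfl⟩; exact hγs hxs
        rw [this, measure_empty]
        simp [indicator, hγs]
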